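/- Action model execution preserves bisimilarity: if (M,s) and (M',s') are bisimilar pointed Kripke models and (𝙼, 𝐬) is a pointed action model (whose preconditions are formulas of the modal language, so that satisfaction is bisimulation-invariant), then (M,s) ⊗ (𝙼,𝐬) and (M',s') ⊗ (𝙼,𝐬) are bisimilar. -/
import Mathlib


structure Kripke (Agent Atom W : Type) where
  R : Agent → W → W → Prop
  V : Atom → W → Prop

inductive Form (Agent Atom : Type) : Type where
  | atom : Atom → Form Agent Atom
  | top  : Form Agent Atom
  | neg  : Form Agent Atom → Form Agent Atom
  | and  : Form Agent Atom → Form Agent Atom → Form Agent Atom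
  | box  : Agent → Form Agent Atom → Form Agent Atom

def Sat {Agent Atom W : Type} (M : Kripke Agent Atom W) : W → Form Agent Atom → Prop
  | _, .top => True
  | s, .atom r => M.V r s
  | s, .neg φ => ¬ Sat M s φ
  | s, .and φ ψ => Sat M s φ ∧ Sat M s ψ
  | s, .box C φ => ∀ t, M.R C s t → Sat M t φ

structure IsBisim {Agent Atom W W' : Type} (M : Kripke Agent Atom W)
    (M' : Kripke Agent Atom W') (Z : W → W' → Prop) : Prop where
  atoms : ∀ ⦃s s'⦄, Z s s' → ∀ r, M.V r s ↔ M'.V r s'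
  forth : ∀ ⦃s s'⦄, Z s s' → ∀ C t, M.R C s t → ∃ t', M'.R C s' t' ∧ Z t t'
  back  : ∀ ⦃s s'⦄, Z s s' → ∀ C t', M'.R C s' t' → ∃ t, M.R C s t ∧ Z t t'

structure ActionModel (Agent Atom E : Type) where
  R : Agent → E → E → Prop
  pre : E → Form Agent Atom

def prodUpdate {Agent Atom W E : Type} (M : Kripke Agent Atom W)
    (A : ActionModel Agent Atom E) :
    Kripke Agent Atom {p : W × E // Sat M p.1 (A.pre p.2)} where
  R C p q := M.R C p.1.1 q.1.1 ∧ A.R C p.1.2 q.1.2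
  V r p := M.V r p.1.1

structure PModel (Agent Atom : Type) where
  W : Type
  M : Kripke Agent Atom W
  s : W

def PSat {Agent Atom : Type} (P : PModel Agent Atom) (φ : Form Agent Atom) : Prop :=
  Sat P.M P.s φ

def PBisim {Agent Atom : Type} (P Q : PModel Agent Atom) : Prop :=
  ∃ Z : P.W → Q.W → Prop, IsBisim P.M Q.M Z ∧ Z P.s Q.s

open Classical in
noncomputable def pUpdate {Agent Atom E : Type} (P : PModel Agent Atom)
    (A : ActionModel Agent Atom E) (a : E) : PModel Agent Atom :=
  if h : Sat P.M P.s (A.pre a) then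
    ⟨_, prodUpdate P.M A, ⟨(P.s, a), h⟩⟩
  else P


lemma sat_iff_of_bisim {Agent Atom W W' : Type} {M : Kripke Agent Atom W}
    {M' : Kripke Agent Atom W'} {Z : W → W' → Prop} (hZ : IsBisim M M' Z)
    (φ : Form Agent Atom) : ∀ {s s'}, Z s s' → (Sat M s φ ↔ Sat M' s' φ) := by
  induction φ with
  | atom r => intro s s' h; exact hZ.atoms h r
  | top => intro s s' h; simp [Sat]
  | neg φ ih => intro s s' h; simp only [Sat]; exact not_congr (ih h)
  | and φ ψ ih1 ih2 => intro s s' h; exact and_congr (ih1 h) (ih2 h)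
  | box C φ ih =>
    intro s s' h
    constructor
    · intro hs t' ht'
      obtain ⟨t, ht, hZt⟩ := hZ.back h C t' ht'
      exact (ih hZt).mp (hs t ht)
    · intro hs t ht
      obtain ⟨t', ht', hZt⟩ := hZ.forth h C t ht
      exact (ih hZt).mpr (hs t' ht')

theorem update_preserves_bisimilarity {Agent Atom E : Type} (P Q : PModel Agent Atom)
    (A : ActionModel Agent Atom E) (a : E) (h : PBisim P Q) :
    PBisim (pUpdate P A a) (pUpdate Q A a) := by
  obtain ⟨Z, hZ, hZs⟩ := h
  by_cases hp : Sat P.M P.s (A.pre a)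
  · have hq : Sat Q.M Q.s (A.pre a) := (sat_iff_of_bisim hZ _ hZs).mp hp
    simp only [pUpdate, dif_pos hp, dif_pos hq]
    refine ⟨fun p q => Z p.1.1 q.1.1 ∧ p.1.2 = q.1.2, ⟨?_, ?_, ?_⟩, hZs, rfl⟩
    · intro p q ⟨h1, _⟩ r
      exact hZ.atoms h1 r
    · intro p q ⟨h1, h2⟩ C t ⟨hm, ha⟩
      obtain ⟨t', ht', hZt⟩ := hZ.forth h1 C t.1.1 hm
      exact ⟨⟨(t', t.1.2), (sat_iff_of_bisim hZ _ hZt).mp t.2⟩, ⟨ht', h2 ▸ ha⟩, hZt, rfl⟩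
    · intro p q ⟨h1, h2⟩ C t' ⟨hm, ha⟩
      obtain ⟨t, ht, hZt⟩ := hZ.back h1 C t'.1.1 hm
      exact ⟨⟨(t, t'.1.2), (sat_iff_of_bisim hZ _ hZt).mpr t'.2⟩, ⟨ht, h2 ▸ ha⟩, hZt, rfl⟩
  · have hq : ¬ Sat Q.M Q.s (A.pre a) := fun h' => hp ((sat_iff_of_bisim hZ _ hZs).mpr h')
    simp only [pUpdate, dif_neg hp, dif_neg hq]
    exact ⟨Z, hZ, hZs⟩
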